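/- Suppose f = h + conj(g) is a harmonic entire mapping where h and g have equal finite positive order ρ_h = ρ_g = ρ, and let τ, τ_h, τ_g denote the types (of order ρ) of f, h, g respectively. Then τ = max{τ_h, τ_g}. -/

import Mathlib

open Filter

/-- Maximum modulus of `F` on the circle `|z| = r`. -/
noncomputable def maxMod (F : ℂ → ℂ) (r : ℝ) : ℝ :=
  sSup ((fun z => ‖F z‖) '' Metric.sphere (0 : ℂ) r)

/-- Order of a (harmonic) entire mapping. -/
noncomputable def hOrder (F : ℂ → ℂ) : EReal :=
  limsup (fun r : ℝ => ((Real.log (Real.log (maxMod F r)) / Real.log r : ℝ) : EReal)) atTop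

/-- Type, of order `ρ`, of a (harmonic) entire mapping. -/
noncomputable def hType (F : ℂ → ℂ) (ρ : ℝ) : EReal :=
  limsup (fun r : ℝ => ((Real.log (maxMod F r) / r ^ ρ : ℝ) : EReal)) atTop

open Metric

lemma maxMod_nonneg (F : ℂ → ℂ) (r : ℝ) : 0 ≤ maxMod F r :=
  Real.sSup_nonneg (by rintro x ⟨z, _, rfl⟩; exact norm_nonneg _)

lemma le_maxMod {F : ℂ → ℂ} (hF : Continuous F) {z : ℂ} {r : ℝ}
    (hz : z ∈ Metric.sphere (0:ℂ) r) : ‖F z‖ ≤ maxMod F r :=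
  le_csSup (((isCompact_sphere (0:ℂ) r).image
    (continuous_norm.comp hF)).bddAbove) (Set.mem_image_of_mem _ hz)

lemma maxMod_le {F : ℂ → ℂ} {r a : ℝ} (ha : 0 ≤ a)
    (hle : ∀ z ∈ Metric.sphere (0:ℂ) r, ‖F z‖ ≤ a) : maxMod F r ≤ a :=
  Real.sSup_le (by rintro x ⟨z, hz, rfl⟩; exact hle z hz) ha

lemma differentiable_conj_conj {g : ℂ → ℂ} (hg : Differentiable ℂ g) :
    Differentiable ℂ fun z => (starRingEnd ℂ) (g ((starRingEnd ℂ) z)) := by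
  intro z₀
  have H := (hg (starRingEnd ℂ z₀)).hasDerivAt
  rw [hasDerivAt_iff_isLittleO] at H
  have hc : Continuous fun z : ℂ => (starRingEnd ℂ) z := Complex.continuous_conj
  have H2 := H.comp_tendsto (hc.tendsto z₀)
  refine (HasDerivAt.differentiableAt (f' := (starRingEnd ℂ) (deriv g ((starRingEnd ℂ) z₀))) ?_)
  rw [hasDerivAt_iff_isLittleO]
  rw [Asymptotics.isLittleO_iff] at H2 ⊢
  intro ε hε
  filter_upwards [H2 hε] with z hz
  have key : (starRingEnd ℂ) (g ((starRingEnd ℂ) z)) - (starRingEnd ℂ) (g ((starRingEnd ℂ) z₀))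
      - (z - z₀) • (starRingEnd ℂ) (deriv g ((starRingEnd ℂ) z₀))
      = (starRingEnd ℂ) ((fun z => g z - g ((starRingEnd ℂ) z₀) -
          (z - (starRingEnd ℂ) z₀) • deriv g ((starRingEnd ℂ) z₀)) ((starRingEnd ℂ) z)) := by
    simp only [Function.comp_apply, map_sub, map_mul, smul_eq_mul, Complex.conj_conj]
  rw [key]
  rw [Complex.norm_conj]
  have e : ‖((fun x' => x' - (starRingEnd ℂ) z₀) ∘ fun z => (starRingEnd ℂ) z) z‖ = ‖z - z₀‖ := by
    simp only [Function.comp_apply, ← map_sub, Complex.norm_conj]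
  rw [← e]; exact hz

open Complex in
lemma circleIntegral_conj_smul_eq_zero {g : ℂ → ℂ} (hg : Differentiable ℂ g) (hg0 : g 0 = 0)
    {R : ℝ} (hR : 0 < R) {w : ℂ} (hw : ‖w‖ < R) :
    (∮ z in C(0, R), (z - w)⁻¹ • (starRingEnd ℂ) (g z)) = 0 := by
  set G : ℂ → ℂ := fun z => (starRingEnd ℂ) (g ((starRingEnd ℂ) z)) with hGdef
  have hG : Differentiable ℂ G := differentiable_conj_conj hg
  have hG0 : G 0 = 0 := by simp [hGdef, hg0]
  set Φ : ℂ → ℂ := fun z => (z - w)⁻¹ • G (((R : ℂ))^2 / z) with hΦdef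
  -- the integrand agrees with Φ on the sphere of radius R
  have hsphere : Set.EqOn (fun z => (z - w)⁻¹ • (starRingEnd ℂ) (g z)) Φ
      (Metric.sphere (0:ℂ) R) := by
    intro z hz
    have hzR : ‖z‖ = R := by simpa using hz
    have hz0 : z ≠ 0 := by
      intro h; rw [h] at hzR; simp at hzR; exact hR.ne' hzR.symm
    have hconj : ((R : ℂ))^2 / z = (starRingEnd ℂ) z := by
      have : z * (starRingEnd ℂ) z = ((R:ℂ))^2 := by
        rw [Complex.mul_conj]
        norm_cast
        rw [Complex.normSq_eq_norm_sq, hzR]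
      rw [← this, mul_div_cancel_left₀ _ hz0]
    simp only [Φ, hconj, hGdef, Complex.conj_conj]
  -- differentiability of Φ away from small disk
  have hΦdiff : ∀ z : ℂ, R ≤ ‖z‖ → DifferentiableAt ℂ Φ z := by
    intro z hz
    have hz0 : z ≠ 0 := by
      intro h; rw [h] at hz; simp at hz; exact absurd hz (not_le.2 hR)
    have hzw : z - w ≠ 0 := by
      intro h
      have hzw' : z = w := sub_eq_zero.mp h
      rw [hzw'] at hz
      exact absurd (lt_of_lt_of_le hw hz) (lt_irrefl _)
    exact ((differentiableAt_id.sub_const w).inv hzw).smul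
      ((hG.differentiableAt).comp z ((differentiableAt_const _).div differentiableAt_id hz0))
  rw [circleIntegral.integral_congr hR.le hsphere]
  have hSeq : ∀ S : ℝ, R ≤ S → (∮ z in C(0, S), Φ z) = ∮ z in C(0, R), Φ z := by
    intro S hS
    apply Complex.circleIntegral_eq_of_differentiable_on_annulus_off_countable hR hS
      Set.countable_empty
    · intro z hz
      have hz' : R ≤ ‖z‖ := by
        simp only [Set.mem_diff, Metric.mem_closedBall, Metric.mem_ball, Complex.dist_eq,
          sub_zero, not_lt] at hz
        exact hz.2
      exact (hΦdiff z hz').continuousAt.continuousWithinAt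
    · intro z hz
      have hz' : R ≤ ‖z‖ := by
        simp only [Set.mem_diff, Metric.mem_ball, Metric.mem_closedBall, Complex.dist_eq,
          sub_zero, not_le] at hz
        exact hz.1.2.le
      exact hΦdiff z hz'
  have key : ∀ ε : ℝ, 0 < ε → ‖∮ z in C(0, R), Φ z‖ ≤ 4 * Real.pi * ε := by
    intro ε hε
    obtain ⟨δ, hδ0, hδ⟩ : ∃ δ > 0, ∀ u : ℂ, ‖u‖ < δ → ‖G u‖ < ε := by
      have hcont := Metric.tendsto_nhds_nhds.mp (hG.continuous.tendsto 0)
      rcases hcont ε hε with ⟨δ, hδ0, hδ⟩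
      refine ⟨δ, hδ0, fun u hu => ?_⟩
      have := hδ (x := u) (by simpa [Complex.dist_eq] using hu)
      simpa [Complex.dist_eq, hG0] using this
    set S : ℝ := max (max R (2 * ‖w‖ + 1)) (R^2/δ + 1) with hSdef
    have hRS : R ≤ S := le_trans (le_max_left _ _) (le_max_left _ _)
    have hS0 : 0 < S := lt_of_lt_of_le hR hRS
    have hwS : 2 * ‖w‖ + 1 ≤ S := le_trans (le_max_right _ _) (le_max_left _ _)
    have hdS : R^2/δ + 1 ≤ S := le_max_right _ _
    have hbound : ∀ z ∈ Metric.sphere (0:ℂ) S, ‖Φ z‖ ≤ ε * 2 / S := by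
      intro z hz
      have hzS : ‖z‖ = S := by simpa using hz
      have hz0 : z ≠ 0 := by
        intro h; rw [h] at hzS; simp at hzS; exact hS0.ne hzS
      have habs : ‖((R:ℂ))^2 / z‖ < δ := by
        rw [norm_div, norm_pow]
        simp only [Complex.norm_real, Real.norm_eq_abs, abs_of_pos hR, hzS]
        rw [div_lt_iff₀ hS0]
        have : R^2/δ < S := lt_of_lt_of_le (lt_add_one _) hdS
        calc R^2 = (R^2/δ) * δ := by field_simp
        _ < S * δ := by exact mul_lt_mul_of_pos_right this hδ0
        _ = δ * S := mul_comm _ _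
      have hGsmall : ‖G (((R:ℂ))^2 / z)‖ ≤ ε := (hδ _ habs).le
      have hzw : S / 2 ≤ ‖z - w‖ := by
        have h1 : ‖z‖ - ‖w‖ ≤ ‖z - w‖ := by
          exact norm_sub_norm_le z w
        have h2 : ‖w‖ ≤ (S - 1)/2 := by linarith
        linarith [hzS ▸ h1]
      have : ‖Φ z‖ = ‖G (((R:ℂ))^2 / z)‖ / ‖z - w‖ := by
        simp only [Φ, smul_eq_mul, norm_mul, norm_inv]
        rw [inv_mul_eq_div]
      rw [this]
      calc ‖G (((R:ℂ))^2 / z)‖ / ‖z - w‖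
          ≤ ε / (S/2) := div_le_div₀ hε.le hGsmall (by linarith) hzw
        _ = ε * 2 / S := by rw [div_div_eq_mul_div]
    have := circleIntegral.norm_integral_le_of_norm_le_const (c := (0:ℂ)) (R := S)
      (f := Φ) (C := ε * 2 / S) hS0.le hbound
    rw [hSeq S hRS] at this
    calc ‖∮ z in C(0, R), Φ z‖ ≤ 2 * Real.pi * S * (ε * 2 / S) := this
      _ = 4 * Real.pi * ε := by field_simp; ring
  by_contra hne
  have hpos : 0 < ‖∮ z in C(0, R), Φ z‖ := norm_pos_iff.mpr hne
  have hk := key (‖∮ z in C(0, R), Φ z‖ / (8 * Real.pi)) (by positivity)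
  have hπ := Real.pi_pos
  have heq : 4 * Real.pi * (‖∮ z in C(0, R), Φ z‖ / (8 * Real.pi)) =
      ‖∮ z in C(0, R), Φ z‖ / 2 := by
    field_simp
    ring
  rw [heq] at hk
  linarith

open Complex in
lemma cauchy_maxMod_bound {h g : ℂ → ℂ} (hh : Differentiable ℂ h) (hg : Differentiable ℂ g)
    (hg0 : g 0 = 0) {r R : ℝ} (hr : 0 ≤ r) (hrR : r < R) :
    maxMod h r ≤ R / (R - r) * maxMod (fun z => h z + (starRingEnd ℂ) (g z)) R := by
  have hR0 : 0 < R := lt_of_le_of_lt hr hrR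
  set f : ℂ → ℂ := fun z => h z + (starRingEnd ℂ) (g z) with hfdef
  have hfc : Continuous f := hh.continuous.add (Complex.continuous_conj.comp hg.continuous)
  have hM0 : 0 ≤ maxMod f R := maxMod_nonneg _ _
  have hcoef : 0 ≤ R / (R - r) := div_nonneg hR0.le (by linarith)
  apply maxMod_le (mul_nonneg hcoef hM0)
  intro w hw
  have hwr : ‖w‖ = r := by simpa using hw
  have hwball : w ∈ Metric.ball (0:ℂ) R := by
    simp only [Metric.mem_ball, Complex.dist_eq, sub_zero]
    rw [hwr]; exact hrR
  have hwR : ‖w‖ < R := by rw [hwr]; exact hrR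
  -- Cauchy integral formula for h
  have hcau : (∮ z in C(0, R), (z - w)⁻¹ • h z) = (2 * Real.pi * Complex.I : ℂ) • h w :=
    (hh.diffContOnCl).circleIntegral_sub_inv_smul hwball
  -- integrability
  have hker : ContinuousOn (fun z : ℂ => (z - w)⁻¹) (Metric.sphere (0:ℂ) R) := by
    apply ContinuousOn.inv₀ ((continuousOn_id.sub continuousOn_const))
    intro z hz
    have hzR : ‖z‖ = R := by simpa using hz
    intro hzw
    have hzw' : z = w := by simpa [sub_eq_zero] using hzw
    rw [hzw', hwr] at hzR
    exact absurd hzR.symm (ne_of_gt hrR)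
  have hint1 : CircleIntegrable (fun z => (z - w)⁻¹ • h z) 0 R :=
    (hker.smul hh.continuous.continuousOn).circleIntegrable hR0.le
  have hint2 : CircleIntegrable (fun z => (z - w)⁻¹ • (starRingEnd ℂ) (g z)) 0 R :=
    (hker.smul (Complex.continuous_conj.comp hg.continuous).continuousOn).circleIntegrable hR0.le
  have hintf : CircleIntegrable (fun z => (z - w)⁻¹ • f z) 0 R :=
    (hker.smul hfc.continuousOn).circleIntegrable hR0.le
  have hsub : (∮ z in C(0, R), (z - w)⁻¹ • (starRingEnd ℂ) (g z))
      = (∮ z in C(0, R), (z - w)⁻¹ • f z) - ∮ z in C(0, R), (z - w)⁻¹ • h z := by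
    rw [← circleIntegral.integral_sub hintf hint1]
    apply circleIntegral.integral_congr hR0.le
    intro z _
    simp only [f, smul_eq_mul]
    ring
  have hzero := circleIntegral_conj_smul_eq_zero hg hg0 hR0 hwR
  rw [hzero, eq_comm, sub_eq_zero, eq_comm, hcau] at hsub
  have hsplit : (∮ z in C(0, R), (z - w)⁻¹ • f z) = (2 * Real.pi * Complex.I : ℂ) • h w := hsub.symm
  -- norm estimate
  have hbound : ∀ z ∈ Metric.sphere (0:ℂ) R, ‖(z - w)⁻¹ • f z‖ ≤ maxMod f R / (R - r) := by
    intro z hz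
    have hzR : ‖z‖ = R := by simpa using hz
    have hzw : R - r ≤ ‖z - w‖ := by
      have h1 : ‖z‖ - ‖w‖ ≤ ‖z - w‖ := by
        exact norm_sub_norm_le z w
      rw [hzR, hwr] at h1
      exact h1
    have hfz : ‖f z‖ ≤ maxMod f R := le_maxMod hfc hz
    have : ‖(z - w)⁻¹ • f z‖ = ‖f z‖ / ‖z - w‖ := by
      simp only [smul_eq_mul, norm_mul, norm_inv]
      rw [inv_mul_eq_div]
    rw [this]
    exact div_le_div₀ hM0 hfz (by linarith) hzw
  have hnorm := circleIntegral.norm_integral_le_of_norm_le_const (c := (0:ℂ)) (R := R)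
    (f := fun z => (z - w)⁻¹ • f z) (C := maxMod f R / (R - r)) hR0.le hbound
  rw [hsplit] at hnorm
  have hlhs : ‖(2 * Real.pi * Complex.I : ℂ) • h w‖ = 2 * Real.pi * ‖h w‖ := by
    simp [norm_smul, abs_of_pos Real.pi_pos]
  rw [hlhs] at hnorm
  have hπ := Real.pi_pos
  have : 2 * Real.pi * ‖h w‖ ≤ 2 * Real.pi * (R * (maxMod f R / (R - r))) := by
    calc 2 * Real.pi * ‖h w‖ ≤ 2 * Real.pi * R * (maxMod f R / (R - r)) := hnorm
      _ = 2 * Real.pi * (R * (maxMod f R / (R - r))) := by ring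
  have := le_of_mul_le_mul_left (by linarith : 2 * Real.pi * ‖h w‖ ≤
    2 * Real.pi * (R * (maxMod f R / (R - r)))) (by linarith : (0:ℝ) < 2 * Real.pi)
  calc ‖h w‖ ≤ R * (maxMod f R / (R - r)) := this
    _ = R / (R - r) * maxMod f R := by ring

lemma maxMod_add_le {h g : ℂ → ℂ} (hh : Differentiable ℂ h) (hg : Differentiable ℂ g) (r : ℝ) :
    maxMod (fun z => h z + (starRingEnd ℂ) (g z)) r ≤ maxMod h r + maxMod g r := by
  apply maxMod_le (add_nonneg (maxMod_nonneg _ _) (maxMod_nonneg _ _))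
  intro z hz
  calc ‖h z + (starRingEnd ℂ) (g z)‖
      ≤ ‖h z‖ + ‖(starRingEnd ℂ) (g z)‖ := norm_add_le _ _
    _ = ‖h z‖ + ‖g z‖ := by rw [Complex.norm_conj]
    _ ≤ maxMod h r + maxMod g r :=
        add_le_add (le_maxMod hh.continuous hz) (le_maxMod hg.continuous hz)

lemma cauchy_maxMod_bound_g {h g : ℂ → ℂ} (hh : Differentiable ℂ h) (hg : Differentiable ℂ g)
    (hg0 : g 0 = 0) {r R : ℝ} (hr : 0 ≤ r) (hrR : r < R) :
    maxMod g r ≤ R / (R - r) *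
      (maxMod (fun z => h z + (starRingEnd ℂ) (g z)) R + ‖h 0‖) := by
  have hR0 : 0 < R := lt_of_le_of_lt hr hrR
  have key := cauchy_maxMod_bound (h := g) (g := fun z => h z - h 0) hg
    (hh.sub_const (h 0)) (by simp) hr hrR
  refine le_trans key ?_
  apply mul_le_mul_of_nonneg_left ?_ (div_nonneg hR0.le (by linarith))
  apply maxMod_le (add_nonneg (maxMod_nonneg _ _) (norm_nonneg _))
  intro z hz
  have heq : g z + (starRingEnd ℂ) (h z - h 0)
      = (starRingEnd ℂ) (h z + (starRingEnd ℂ) (g z)) - (starRingEnd ℂ) (h 0) := by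
    simp [map_sub, map_add, Complex.conj_conj]
    ring
  rw [heq]
  calc ‖(starRingEnd ℂ) (h z + (starRingEnd ℂ) (g z)) - (starRingEnd ℂ) (h 0)‖
      ≤ ‖(starRingEnd ℂ) (h z + (starRingEnd ℂ) (g z))‖
        + ‖(starRingEnd ℂ) (h 0)‖ := by
          exact norm_sub_le ((starRingEnd ℂ) (h z + (starRingEnd ℂ) (g z))) ((starRingEnd ℂ) (h 0))
    _ = ‖h z + (starRingEnd ℂ) (g z)‖ + ‖h 0‖ := by
        rw [Complex.norm_conj, Complex.norm_conj]
    _ ≤ maxMod (fun z => h z + (starRingEnd ℂ) (g z)) R + ‖h 0‖ := by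
        have hfc : Continuous fun z => h z + (starRingEnd ℂ) (g z) :=
          hh.continuous.add (Complex.continuous_conj.comp hg.continuous)
        exact add_le_add_left (le_maxMod hfc hz) _

lemma maxMod_mono_entire {F : ℂ → ℂ} (hF : Differentiable ℂ F) {r R : ℝ} (hr : 0 ≤ r)
    (hrR : r ≤ R) : maxMod F r ≤ maxMod F R := by
  rcases eq_or_lt_of_le hrR with rfl | hlt
  · exact le_refl _
  have hR0 : 0 < R := lt_of_le_of_lt hr hlt
  apply maxMod_le (maxMod_nonneg _ _)
  intro z hz
  have hzr : ‖z‖ = r := by simpa using hz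
  have hcl : z ∈ closure (Metric.ball (0:ℂ) R) := by
    rw [closure_ball (0:ℂ) hR0.ne']
    simp only [Metric.mem_closedBall, Complex.dist_eq, sub_zero]
    rw [hzr]; exact hlt.le
  have hfr : ∀ w ∈ frontier (Metric.ball (0:ℂ) R), ‖F w‖ ≤ maxMod F R := by
    intro w hw
    rw [frontier_ball (0:ℂ) hR0.ne'] at hw
    exact le_maxMod hF.continuous hw
  have := Complex.norm_le_of_forall_mem_frontier_norm_le (U := Metric.ball (0:ℂ) R)
    Metric.isBounded_ball (hF.diffContOnCl) hfr hcl
  simpa using this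

lemma freq_big {F : ℂ → ℂ} (hF : Differentiable ℂ F) {ρ : ℝ} (hρ : 0 < ρ)
    (ho : hOrder F = (ρ : EReal)) :
    ∃ᶠ r in atTop, 2 ≤ r ∧ r ^ (ρ/2) ≤ Real.log (maxMod F r) := by
  -- first, `maxMod F` must get large somewhere
  obtain ⟨r₀, hr₀1, hr₀⟩ : ∃ r₀ : ℝ, 1 ≤ r₀ ∧ 3 ≤ maxMod F r₀ := by
    by_contra hcon
    push_neg at hcon
    have hbd : ∀ z : ℂ, ‖F z‖ ≤ 3 := by
      intro z
      have h1 : ‖F z‖ ≤ maxMod F (‖z‖) :=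
        le_maxMod hF.continuous (by simp)
      rcases le_or_gt 1 (‖z‖) with hz | hz
      · exact le_trans h1 (hcon _ hz).le
      · have h2 : maxMod F (‖z‖) ≤ maxMod F 1 :=
          maxMod_mono_entire hF (norm_nonneg z) hz.le
        exact le_trans h1 (le_trans h2 (hcon 1 le_rfl).le)
    have hconst : ∀ z : ℂ, F z = F 0 := by
      intro z
      apply hF.apply_eq_apply_of_bounded
      rw [Metric.isBounded_iff_subset_closedBall 0]
      exact ⟨3, by rintro x ⟨z, rfl⟩; simpa [Complex.dist_eq] using hbd z⟩
    have hmm : ∀ r : ℝ, 0 ≤ r → maxMod F r = ‖F 0‖ := by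
      intro r hr
      refine le_antisymm (maxMod_le (norm_nonneg _) fun z _ => by rw [hconst z]) ?_
      have : (r : ℂ) ∈ Metric.sphere (0:ℂ) r := by
        simp [Complex.dist_eq, abs_of_nonneg hr]
      have h1 := le_maxMod hF.continuous this
      rwa [hconst (r:ℂ)] at h1
    have htend : Tendsto (fun r : ℝ =>
        ((Real.log (Real.log (maxMod F r)) / Real.log r : ℝ) : EReal)) atTop (nhds (0:EReal)) := by
      have h1 : Tendsto (fun r : ℝ => Real.log (Real.log (maxMod F r)) / Real.log r)
          atTop (nhds 0) := by
        apply Tendsto.congr' (f₁ := fun r : ℝ =>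
          Real.log (Real.log (‖F 0‖)) / Real.log r)
        · filter_upwards [eventually_ge_atTop (0:ℝ)] with r hr
          rw [hmm r hr]
        · exact Tendsto.div_atTop tendsto_const_nhds Real.tendsto_log_atTop
      have h2 := (EReal.tendsto_coe (a := 0)).mpr h1
      simpa using h2
    have := htend.limsup_eq
    rw [← hOrder] at this
    rw [this] at ho
    exact absurd (EReal.coe_eq_coe_iff.mp ho.symm) (ne_of_gt hρ)
  have hmono : ∀ r : ℝ, r₀ ≤ r → 3 ≤ maxMod F r := fun r hr =>
    le_trans hr₀ (maxMod_mono_entire hF (by linarith) hr)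
  have hlt : ((ρ/2 : ℝ) : EReal) < limsup (fun r : ℝ =>
      ((Real.log (Real.log (maxMod F r)) / Real.log r : ℝ) : EReal)) atTop := by
    rw [← hOrder, ho]
    exact_mod_cast (by linarith : ρ/2 < ρ)
  have hfreq := Filter.frequently_lt_of_lt_limsup (by isBoundedDefault) hlt
  have hev : ∀ᶠ r : ℝ in atTop, max 2 r₀ ≤ r := eventually_ge_atTop _
  refine (hfreq.and_eventually hev).mono ?_
  rintro r ⟨hlt', hr⟩
  have hr2 : 2 ≤ r := le_trans (le_max_left _ _) hr
  have hrr₀ : r₀ ≤ r := le_trans (le_max_right _ _) hr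
  have hlogr : 0 < Real.log r := Real.log_pos (by linarith)
  have hM : 3 ≤ maxMod F r := hmono r hrr₀
  have hlogM : 0 < Real.log (maxMod F r) :=
    lt_of_lt_of_le (Real.log_pos (by norm_num)) (Real.log_le_log (by norm_num) hM)
  have hineq : ρ/2 * Real.log r < Real.log (Real.log (maxMod F r)) := by
    have : (ρ/2 : ℝ) < Real.log (Real.log (maxMod F r)) / Real.log r := by
      exact_mod_cast hlt'
    calc ρ/2 * Real.log r
        < Real.log (Real.log (maxMod F r)) / Real.log r * Real.log r :=
          mul_lt_mul_of_pos_right this hlogr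
      _ = Real.log (Real.log (maxMod F r)) := by field_simp
  refine ⟨hr2, ?_⟩
  have : r ^ (ρ/2) = Real.exp (Real.log r * (ρ/2)) := Real.rpow_def_of_pos (by linarith) _
  rw [this]
  calc Real.exp (Real.log r * (ρ/2)) ≤ Real.exp (Real.log (Real.log (maxMod F r))) :=
        Real.exp_le_exp.mpr (by linarith)
    _ = Real.log (maxMod F r) := Real.exp_log hlogM

lemma log_max_one {x : ℝ} (hx : 0 ≤ x) : Real.log (max 1 x) = max 0 (Real.log x) := by
  rcases le_or_gt x 1 with hx1 | hx1
  · rw [max_eq_left hx1, Real.log_one, max_eq_left (Real.log_nonpos hx hx1)]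
  · rw [max_eq_right hx1.le, max_eq_right (Real.log_nonneg hx1.le)]

lemma log_le_log_mul_max {m K M : ℝ} (hm : 0 ≤ m) (hK : 1 ≤ K) (hM : 0 ≤ M)
    (h2 : m ≤ K * max 1 M) :
    Real.log m ≤ Real.log K + max 0 (Real.log M) := by
  rcases eq_or_lt_of_le hm with heq | hpos
  · rw [← heq, Real.log_zero]
    exact add_nonneg (Real.log_nonneg hK) (le_max_left _ _)
  · calc Real.log m ≤ Real.log (K * max 1 M) := Real.log_le_log hpos h2
      _ = Real.log K + Real.log (max 1 M) :=
          Real.log_mul (by linarith) (by positivity)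
      _ = Real.log K + max 0 (Real.log M) := by rw [log_max_one hM]

lemma EReal_le_of_forall_lt {x y : EReal} (h : ∀ c : ℝ, y < (c : EReal) → x ≤ (c : EReal)) :
    x ≤ y := by
  by_contra hxy
  push_neg at hxy
  obtain ⟨c, hc1, hc2⟩ := EReal.exists_between_coe_real hxy
  exact absurd (h c hc1) (not_le.mpr hc2)

lemma EReal_le_coe_of_forall_add {x : EReal} {y : ℝ}
    (h : ∀ δ : ℝ, 0 < δ → x ≤ ((y + δ : ℝ) : EReal)) : x ≤ (y : EReal) := by
  by_contra hxy
  push_neg at hxy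
  obtain ⟨c, hc1, hc2⟩ := EReal.exists_between_coe_real hxy
  have hδ : 0 < c - y := by
    have := EReal.coe_lt_coe_iff.mp hc1
    linarith
  have := h (c - y) hδ
  rw [show y + (c - y) = c by ring] at this
  exact absurd (lt_of_lt_of_le hc2 this) (lt_irrefl _)

theorem type_eq_max_of_equal_orders (h g : ℂ → ℂ)
    (hh : Differentiable ℂ h) (hg : Differentiable ℂ g) (hg0 : g 0 = 0)
    (ρ : ℝ) (hρ : 0 < ρ)
    (hoh : hOrder h = (ρ : EReal)) (hog : hOrder g = (ρ : EReal)) :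
    hType (fun z => h z + starRingEnd ℂ (g z)) ρ = max (hType h ρ) (hType g ρ) := by
  set f : ℂ → ℂ := fun z => h z + starRingEnd ℂ (g z) with hfdef
  have hfc : Continuous f := hh.continuous.add (Complex.continuous_conj.comp hg.continuous)
  have hfreqh := freq_big hh hρ hoh
  have type_nonneg : ∀ F : ℂ → ℂ,
      (∃ᶠ r in atTop, 2 ≤ r ∧ r ^ (ρ/2) ≤ Real.log (maxMod F r)) →
      (0 : EReal) ≤ hType F ρ := by
    intro F hfreq
    apply le_limsup_of_frequently_le'
    refine hfreq.mono ?_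
    rintro r ⟨hr2, hbig⟩
    have hrρ : (0:ℝ) < r ^ ρ := Real.rpow_pos_of_pos (by linarith) _
    have h0 : (0:ℝ) ≤ Real.log (maxMod F r) / r ^ ρ :=
      div_nonneg (le_trans (Real.rpow_nonneg (by linarith) _) hbig) hrρ.le
    exact_mod_cast h0
  have hTh0 : (0 : EReal) ≤ hType h ρ := type_nonneg h hfreqh
  have hboundh : ∀ ε : ℝ, 0 < ε → ∀ r : ℝ, 1 ≤ r →
      maxMod h r ≤ (1+ε)/ε * maxMod f ((1+ε)*r) := by
    intro ε hε r hr
    have hr0 : (0:ℝ) < r := by linarith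
    have hrR : r < (1+ε)*r := by nlinarith
    have hb := cauchy_maxMod_bound hh hg hg0 hr0.le hrR
    rwa [show (1+ε)*r / ((1+ε)*r - r) = (1+ε)/ε by
      rw [show (1+ε)*r - r = ε*r by ring, mul_comm (1+ε) r, mul_comm ε r,
        mul_div_mul_left _ _ hr0.ne']] at hb
  have hboundg : ∀ ε : ℝ, 0 < ε → ∀ r : ℝ, 1 ≤ r →
      maxMod g r ≤ (1+ε)/ε * (maxMod f ((1+ε)*r) + ‖h 0‖) := by
    intro ε hε r hr
    have hr0 : (0:ℝ) < r := by linarith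
    have hrR : r < (1+ε)*r := by nlinarith
    have hb := cauchy_maxMod_bound_g hh hg hg0 hr0.le hrR
    rwa [show (1+ε)*r / ((1+ε)*r - r) = (1+ε)/ε by
      rw [show (1+ε)*r - r = ε*r by ring, mul_comm (1+ε) r, mul_comm ε r,
        mul_div_mul_left _ _ hr0.ne']] at hb
  have hTf0 : (0 : EReal) ≤ hType f ρ := by
    apply le_limsup_of_frequently_le'
    rw [frequently_atTop]
    intro b
    obtain ⟨r, hrb, hr2, hbig⟩ := frequently_atTop.mp hfreqh (max b 2)
    have hr2' : (2:ℝ) ≤ r := le_trans (le_max_right b 2) hrb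
    have hrb' : b ≤ r := le_trans (le_max_left b 2) hrb
    refine ⟨2*r, by linarith, ?_⟩
    have hr1 : (1:ℝ) ≤ r := by linarith
    have hM := hboundh 1 one_pos r hr1
    rw [show ((1:ℝ)+1)/1 = 2 by norm_num, show ((1:ℝ)+1)*r = 2*r by ring] at hM
    have hM2 : maxMod h r ≤ 2 * max 1 (maxMod f (2*r)) :=
      le_trans hM (by nlinarith [le_max_right (1:ℝ) (maxMod f (2*r))])
    have hlog := log_le_log_mul_max (maxMod_nonneg h r) one_le_two
      (maxMod_nonneg f (2*r)) hM2
    have hlog2 : Real.log 2 < 1 := by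
      have := Real.log_lt_sub_one_of_pos (by norm_num : (0:ℝ) < 2) (by norm_num)
      linarith
    have hbig2 : (1:ℝ) < r ^ (ρ/2) := by
      have h1 : (1:ℝ) < 2 ^ (ρ/2) := by
        rw [Real.one_lt_rpow_iff_of_pos (by norm_num)]
        exact Or.inl ⟨by norm_num, by linarith⟩
      have h2 : (2:ℝ) ^ (ρ/2) ≤ r ^ (ρ/2) :=
        Real.rpow_le_rpow (by norm_num) hr2 (by linarith)
      linarith
    have hmax : 0 < max 0 (Real.log (maxMod f (2*r))) := by linarith
    have hpos : 0 < Real.log (maxMod f (2*r)) := by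
      rcases max_cases 0 (Real.log (maxMod f (2*r))) with ⟨he, _⟩ | ⟨he, _⟩
      · rw [he] at hmax; exact absurd hmax (lt_irrefl _)
      · rwa [he] at hmax
    have hsρ : (0:ℝ) < (2*r) ^ ρ := Real.rpow_pos_of_pos (by linarith) _
    have hfin : (0:ℝ) ≤ Real.log (maxMod f (2*r)) / (2*r) ^ ρ :=
      (div_pos hpos hsρ).le
    exact_mod_cast hfin
  -- upper bound
  have hupper : hType f ρ ≤ max (hType h ρ) (hType g ρ) := by
    by_cases hμtop : max (hType h ρ) (hType g ρ) = ⊤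
    · rw [hμtop]; exact le_top
    apply EReal_le_of_forall_lt
    intro c hc
    obtain ⟨c', hc'1, hc'2⟩ := EReal.exists_between_coe_real hc
    have hc'0 : (0:ℝ) < c' := by
      have hlt : (0:EReal) < (c' : EReal) :=
        lt_of_le_of_lt (le_trans hTh0 (le_max_left _ _)) hc'1
      exact_mod_cast hlt
    have hcc' : c' < c := EReal.coe_lt_coe_iff.mp hc'2
    have hevh : ∀ᶠ r : ℝ in atTop, Real.log (maxMod h r) / r ^ ρ < c' := by
      have hlt : hType h ρ < (c' : EReal) := lt_of_le_of_lt (le_max_left _ _) hc'1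
      filter_upwards [eventually_lt_of_limsup_lt hlt] with r hr
      exact_mod_cast hr
    have hevg : ∀ᶠ r : ℝ in atTop, Real.log (maxMod g r) / r ^ ρ < c' := by
      have hlt : hType g ρ < (c' : EReal) := lt_of_le_of_lt (le_max_right _ _) hc'1
      filter_upwards [eventually_lt_of_limsup_lt hlt] with r hr
      exact_mod_cast hr
    have htend : Tendsto (fun r : ℝ => Real.log 2 / r ^ ρ) atTop (nhds 0) :=
      Tendsto.div_atTop tendsto_const_nhds (tendsto_rpow_atTop hρ)
    have hev2 : ∀ᶠ r : ℝ in atTop, Real.log 2 / r ^ ρ < c - c' :=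
      htend.eventually_lt_const (by linarith)
    apply limsup_le_of_le (by isBoundedDefault)
    filter_upwards [hevh, hevg, hev2, eventually_ge_atTop (1:ℝ)] with r h1 h2 h3 hr1
    rw [EReal.coe_le_coe_iff]
    have hrρ : (0:ℝ) < r ^ ρ := Real.rpow_pos_of_pos (by linarith) _
    have hMfr : maxMod f r ≤ 2 * max (maxMod h r) (maxMod g r) := by
      have hadd := maxMod_add_le hh hg r
      have h4 : maxMod h r ≤ max (maxMod h r) (maxMod g r) := le_max_left _ _
      have h5 : maxMod g r ≤ max (maxMod h r) (maxMod g r) := le_max_right _ _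
      calc maxMod f r ≤ maxMod h r + maxMod g r := hadd
        _ ≤ 2 * max (maxMod h r) (maxMod g r) := by linarith
    have hmax0 : (0:ℝ) ≤ max (maxMod h r) (maxMod g r) :=
      le_trans (maxMod_nonneg h r) (le_max_left _ _)
    have hMfr' : maxMod f r ≤ 2 * max 1 (max (maxMod h r) (maxMod g r)) :=
      le_trans hMfr (by nlinarith [le_max_right (1:ℝ) (max (maxMod h r) (maxMod g r))])
    have hlog := log_le_log_mul_max (maxMod_nonneg f r) one_le_two hmax0 hMfr'
    have hkey : max 0 (Real.log (max (maxMod h r) (maxMod g r))) / r ^ ρ ≤ c' := by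
      rcases le_total (maxMod h r) (maxMod g r) with hle | hle
      · rw [max_eq_right hle, ← max_div_div_right hrρ.le, zero_div]
        exact max_le hc'0.le h2.le
      · rw [max_eq_left hle, ← max_div_div_right hrρ.le, zero_div]
        exact max_le hc'0.le h1.le
    calc Real.log (maxMod f r) / r ^ ρ
        ≤ (Real.log 2 + max 0 (Real.log (max (maxMod h r) (maxMod g r)))) / r ^ ρ := by
          gcongr
      _ = Real.log 2 / r ^ ρ
          + max 0 (Real.log (max (maxMod h r) (maxMod g r))) / r ^ ρ := add_div _ _ _
      _ ≤ (c - c') + c' := add_le_add h3.le hkey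
      _ = c := by ring
  -- lower bound
  have hlower : ∀ (F : ℂ → ℂ) (A : ℝ), 0 ≤ A →
      (∀ ε : ℝ, 0 < ε → ∀ r : ℝ, 1 ≤ r →
        maxMod F r ≤ (1+ε)/ε * (maxMod f ((1+ε)*r) + A)) →
      hType F ρ ≤ hType f ρ := by
    intro F A hA hbound
    by_cases hftop : hType f ρ = ⊤
    · rw [hftop]; exact le_top
    apply EReal_le_of_forall_lt
    intro c hc
    obtain ⟨c', hc'1, hc'2⟩ := EReal.exists_between_coe_real hc
    have hc'0 : (0:ℝ) < c' := by
      have hlt : (0:EReal) < (c' : EReal) := lt_of_le_of_lt hTf0 hc'1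
      exact_mod_cast hlt
    have hcc' : c' < c := EReal.coe_lt_coe_iff.mp hc'2
    set X : ℝ := (c/c') ^ ρ⁻¹ with hXdef
    have hX1 : 1 < X := by
      rw [hXdef, Real.one_lt_rpow_iff_of_pos (div_pos (by linarith) hc'0)]
      exact Or.inl ⟨(one_lt_div hc'0).mpr hcc', by positivity⟩
    set ε : ℝ := min 1 (X - 1) with hεdef
    have hε0 : 0 < ε := lt_min one_pos (by linarith)
    have hε1 : ε ≤ 1 := min_le_left _ _
    have h1ε : 1 + ε ≤ X := by
      rcases min_cases 1 (X-1) with ⟨he, hle⟩ | ⟨he, hle⟩ <;>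
        · rw [hεdef, he]; try linarith
    have hpow : (1+ε) ^ ρ * c' ≤ c := by
      have h2 : (1+ε) ^ ρ ≤ X ^ ρ := Real.rpow_le_rpow (by linarith) h1ε hρ.le
      have h3 : X ^ ρ = c/c' := Real.rpow_inv_rpow (div_pos (by linarith) hc'0).le hρ.ne'
      rw [h3] at h2
      calc (1+ε) ^ ρ * c' ≤ (c/c') * c' := mul_le_mul_of_nonneg_right h2 hc'0.le
        _ = c := div_mul_cancel₀ c hc'0.ne'
    refine le_trans ?_ (EReal.coe_le_coe_iff.mpr hpow)
    apply EReal_le_coe_of_forall_add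
    intro δ hδ
    set K : ℝ := (1+ε)/ε * (1 + A) with hKdef
    have hCpos : (0:ℝ) < (1+ε)/ε := by positivity
    have hK1 : 1 ≤ K := by
      have h1 : (1:ℝ) ≤ (1+ε)/ε := by
        rw [le_div_iff₀ hε0]; linarith
      nlinarith
    have hevs : ∀ᶠ s : ℝ in atTop, Real.log (maxMod f s) / s ^ ρ < c' := by
      filter_upwards [eventually_lt_of_limsup_lt hc'1] with s hs
      exact_mod_cast hs
    have hcomp : Tendsto (fun r : ℝ => (1+ε)*r) atTop atTop :=
      Tendsto.const_mul_atTop (by linarith) tendsto_id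
    have htendK : Tendsto (fun r : ℝ => Real.log K / r ^ ρ) atTop (nhds 0) :=
      Tendsto.div_atTop tendsto_const_nhds (tendsto_rpow_atTop hρ)
    have hevK : ∀ᶠ r : ℝ in atTop, Real.log K / r ^ ρ < δ := htendK.eventually_lt_const hδ
    apply limsup_le_of_le (by isBoundedDefault)
    filter_upwards [hcomp.eventually hevs, hevK, eventually_ge_atTop (1:ℝ)] with r hs hKr hr1
    rw [EReal.coe_le_coe_iff]
    have hr0 : (0:ℝ) < r := by linarith
    have hrρ : (0:ℝ) < r ^ ρ := Real.rpow_pos_of_pos hr0 _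
    have hε1r : (0:ℝ) < 1 + ε := by linarith
    have hsρ : (0:ℝ) < ((1+ε)*r) ^ ρ := Real.rpow_pos_of_pos (by positivity) _
    set M : ℝ := maxMod f ((1+ε)*r) with hMdef
    have hM0 : 0 ≤ M := maxMod_nonneg _ _
    have hmax1 : (1:ℝ) ≤ max 1 M := le_max_left _ _
    have hMle : M ≤ max 1 M := le_max_right _ _
    have hstep : maxMod F r ≤ K * max 1 M := by
      have h1 : M + A ≤ (1 + A) * max 1 M := by nlinarith
      calc maxMod F r ≤ (1+ε)/ε * (M + A) := hbound ε hε0 r hr1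
        _ ≤ (1+ε)/ε * ((1 + A) * max 1 M) := by
            exact mul_le_mul_of_nonneg_left h1 hCpos.le
        _ = K * max 1 M := by rw [hKdef]; ring
    have hlog : Real.log (maxMod F r) ≤ Real.log K + max 0 (Real.log M) :=
      log_le_log_mul_max (maxMod_nonneg F r) hK1 hM0 hstep
    have hrpow : ((1+ε)*r) ^ ρ = (1+ε)^ρ * r^ρ := Real.mul_rpow hε1r.le hr0.le
    have hmaxdiv : max 0 (Real.log M) / r ^ ρ
        = (1+ε)^ρ * (max 0 (Real.log M) / ((1+ε)*r) ^ ρ) := by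
      rw [hrpow]
      have hp : (0:ℝ) < (1+ε)^ρ := Real.rpow_pos_of_pos hε1r _
      field_simp
    have hkey : max 0 (Real.log M) / ((1+ε)*r) ^ ρ ≤ c' := by
      rw [← max_div_div_right hsρ.le, zero_div]
      exact max_le hc'0.le hs.le
    calc Real.log (maxMod F r) / r ^ ρ
        ≤ (Real.log K + max 0 (Real.log M)) / r ^ ρ := by gcongr
      _ = Real.log K / r ^ ρ + max 0 (Real.log M) / r ^ ρ := add_div _ _ _
      _ = Real.log K / r ^ ρ + (1+ε)^ρ * (max 0 (Real.log M) / ((1+ε)*r) ^ ρ) := by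
          rw [hmaxdiv]
      _ ≤ δ + (1+ε)^ρ * c' := by
          refine add_le_add hKr.le ?_
          exact mul_le_mul_of_nonneg_left hkey (Real.rpow_pos_of_pos hε1r _).le
      _ = (1+ε) ^ ρ * c' + δ := by ring
  have hlh : hType h ρ ≤ hType f ρ :=
    hlower h 0 le_rfl (fun ε hε r hr => by simpa using hboundh ε hε r hr)
  have hlg : hType g ρ ≤ hType f ρ :=
    hlower g (‖h 0‖) (norm_nonneg _) hboundg
  exact le_antisymm hupper (max_le hlh hlg)
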